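/- Let F ∈ ℝ^{n_ψ × n_ψ} be Schur stable and let w : ℝ^{n_ψ} → ℝ^{n_ψ} satisfy ‖w(s)‖ ≤ γ‖s‖ for a constant γ ≥ 0. If γ · Σ_{k=0}^∞ ‖F^k‖ < 1, then every trajectory of s_{k+1} = F s_k + w(s_k) converges to the origin: s_k → 0 as k → ∞. -/

import Mathlib

open Filter Topology

private lemma stmt15_norm_le (n : ℕ) (A : Matrix (Fin n) (Fin n) ℝ) :
    ‖Matrix.toEuclideanCLM (𝕜 := ℝ) A‖ ≤
      ‖Matrix.toEuclideanCLM (𝕜 := ℂ) (A.map (algebraMap ℝ ℂ))‖ := by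
  refine ContinuousLinearMap.opNorm_le_bound _ (norm_nonneg _) fun x => ?_
  set xc : EuclideanSpace ℂ (Fin n) := WithLp.toLp 2 (fun i => (x i : ℂ)) with hxc
  have hnx : ‖xc‖ = ‖x‖ := by
    simp [hxc, EuclideanSpace.norm_eq]
  have happ : Matrix.toEuclideanCLM (𝕜 := ℂ) (A.map (algebraMap ℝ ℂ)) xc =
      WithLp.toLp 2 (fun i => ((Matrix.toEuclideanCLM (𝕜 := ℝ) A x) i : ℂ)) := by
    ext i
    show ((A.map (algebraMap ℝ ℂ)).mulVec (fun j => (x j : ℂ))) i = ((A.mulVec fun j => x j) i : ℂ)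
    simp [Matrix.mulVec, dotProduct]
  have h2 : ‖Matrix.toEuclideanCLM (𝕜 := ℂ) (A.map (algebraMap ℝ ℂ)) xc‖
      = ‖Matrix.toEuclideanCLM (𝕜 := ℝ) A x‖ := by
    rw [happ]
    simp [EuclideanSpace.norm_eq]
  calc ‖Matrix.toEuclideanCLM (𝕜 := ℝ) A x‖
      = ‖Matrix.toEuclideanCLM (𝕜 := ℂ) (A.map (algebraMap ℝ ℂ)) xc‖ := h2.symm
    _ ≤ ‖Matrix.toEuclideanCLM (𝕜 := ℂ) (A.map (algebraMap ℝ ℂ))‖ * ‖xc‖ :=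
        ContinuousLinearMap.le_opNorm _ _
    _ = _ := by rw [hnx]

private lemma stmt15_geom (n : ℕ) (hn : 0 < n) (N : Matrix (Fin n) (Fin n) ℂ)
    (h : ∀ μ ∈ spectrum ℂ N, ‖μ‖ < 1) :
    ∃ r : ℝ, 0 ≤ r ∧ r < 1 ∧
      ∀ᶠ k in atTop, ‖(Matrix.toEuclideanCLM (𝕜 := ℂ) N) ^ k‖ ≤ r ^ k := by
  set G := Matrix.toEuclideanCLM (𝕜 := ℂ) N with hG
  have hnt : Nontrivial (EuclideanSpace ℂ (Fin n)) :=
    Module.nontrivial_of_finrank_pos (R := ℂ) (by simp [finrank_euclideanSpace_fin, hn])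
  have hntA : Nontrivial (EuclideanSpace ℂ (Fin n) →L[ℂ] EuclideanSpace ℂ (Fin n)) := by
    obtain ⟨x, hx⟩ := exists_ne (0 : EuclideanSpace ℂ (Fin n))
    exact ⟨1, 0, fun hh => hx (by simpa using DFunLike.congr_fun hh x)⟩
  have hspec : spectrum ℂ G = spectrum ℂ N :=
    AlgEquiv.spectrum_eq (Matrix.toEuclideanCLM (𝕜 := ℂ) (n := Fin n)) N
  have hρ : spectralRadius ℂ G < 1 := by
    have hne : (spectrum ℂ G).Nonempty := spectrum.nonempty G
    have := spectrum.spectralRadius_lt_of_forall_lt_of_nonempty (𝕜 := ℂ) hne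
      (r := 1) (fun k hk => by
        have := h k (hspec ▸ hk)
        simpa [← NNReal.coe_lt_coe] using this)
    simpa using this
  obtain ⟨r, hr1, hr2⟩ := exists_between hρ
  set r' : NNReal := r.toNNReal with hr'
  have hrne : r ≠ ⊤ := ne_top_of_lt hr2
  have hrc : (r' : ENNReal) = r := ENNReal.coe_toNNReal hrne
  have hr'1 : (r' : ℝ) < 1 := by
    have : (r' : ENNReal) < 1 := hrc ▸ hr2
    exact_mod_cast this
  refine ⟨r', r'.coe_nonneg, hr'1, ?_⟩
  have hev := (spectrum.pow_nnnorm_pow_one_div_tendsto_nhds_spectralRadius G).eventually_lt_const hr1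
  filter_upwards [hev, eventually_ge_atTop 1] with k hk hk1
  have hkne : (k : ℝ) ≠ 0 := by positivity
  have heq : (‖G ^ k‖₊ : ENNReal) = ((‖G ^ k‖₊ : ENNReal) ^ (1 / (k:ℝ))) ^ (k : ℕ) := by
    rw [← ENNReal.rpow_natCast _ k, ← ENNReal.rpow_mul, one_div, inv_mul_cancel₀ hkne,
      ENNReal.rpow_one]
  have hle : (‖G ^ k‖₊ : ENNReal) ≤ (r' : ENNReal) ^ k := by
    rw [heq, hrc]
    exact pow_le_pow_left₀ (by positivity) hk.le k
  have hle' : ‖G ^ k‖₊ ≤ r' ^ k := by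
    rw [← ENNReal.coe_pow] at hle
    exact_mod_cast hle
  calc ‖G ^ k‖ = (‖G ^ k‖₊ : ℝ) := rfl
    _ ≤ ((r' ^ k : NNReal) : ℝ) := by exact_mod_cast hle'
    _ = (r' : ℝ) ^ k := by push_cast; ring

/-- Small-gain convergence of the perturbed closed-loop lifted dynamics. -/
theorem stmt15 (n : ℕ) (M : Matrix (Fin n) (Fin n) ℝ)
    (hschur : ∀ μ ∈ spectrum ℂ (M.map (algebraMap ℝ ℂ)), ‖μ‖ < 1)
    (F : EuclideanSpace ℝ (Fin n) →L[ℝ] EuclideanSpace ℝ (Fin n))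
    (hF : F = Matrix.toEuclideanCLM (𝕜 := ℝ) M)
    (γ : ℝ) (hγ : 0 ≤ γ)
    (w : EuclideanSpace ℝ (Fin n) → EuclideanSpace ℝ (Fin n))
    (hw : ∀ s, ‖w s‖ ≤ γ * ‖s‖)
    (hsg : γ * (∑' k : ℕ, ‖F ^ k‖) < 1)
    (s : ℕ → EuclideanSpace ℝ (Fin n))
    (hs : ∀ k, s (k + 1) = F (s k) + w (s k)) :
    Tendsto s atTop (𝓝 0) := by
  rcases Nat.eq_zero_or_pos n with hn0 | hn
  · subst hn0
    have hz : ∀ k, s k = 0 := fun k => Subsingleton.elim _ _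
    simp only [funext hz]
    exact tendsto_const_nhds
  -- notation
  set a : ℕ → ℝ := fun k => ‖s k‖ with ha
  set c : ℕ → ℝ := fun k => ‖F ^ k‖ with hc
  -- geometric decay of the powers
  obtain ⟨r, hr0, hr1, hev⟩ := stmt15_geom n hn (M.map (algebraMap ℝ ℂ)) hschur
  have hFG : ∀ k, c k ≤ ‖(Matrix.toEuclideanCLM (𝕜 := ℂ) (M.map (algebraMap ℝ ℂ))) ^ k‖ := by
    intro k
    have e1 : F ^ k = Matrix.toEuclideanCLM (𝕜 := ℝ) (M ^ k) := by
      rw [hF, map_pow]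
    have e2 : (Matrix.toEuclideanCLM (𝕜 := ℂ) (M.map (algebraMap ℝ ℂ))) ^ k
        = Matrix.toEuclideanCLM (𝕜 := ℂ) ((M ^ k).map (algebraMap ℝ ℂ)) := by
      rw [← map_pow]
      congr 1
      have := map_pow ((algebraMap ℝ ℂ).mapMatrix) M k
      simpa [RingHom.mapMatrix_apply] using this.symm
    show ‖F ^ k‖ ≤ _
    rw [e1, e2]
    exact stmt15_norm_le n (M ^ k)
  have hcev : ∀ᶠ k in atTop, c k ≤ r ^ k := by
    filter_upwards [hev] with k hk using (hFG k).trans hk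
  have hsum : Summable c := by
    obtain ⟨K, hK⟩ := eventually_atTop.mp hcev
    rw [← summable_nat_add_iff K]
    refine Summable.of_nonneg_of_le (fun k => norm_nonneg _) (fun k => hK (k + K) (by omega)) ?_
    have hgeo : Summable (fun k : ℕ => r ^ k * r ^ K) :=
      (summable_geometric_of_lt_one hr0 hr1).mul_right _
    simpa [pow_add] using hgeo
  have htend0 : Tendsto c atTop (𝓝 0) := hsum.tendsto_atTop_zero
  set S : ℝ := ∑' k, c k with hSdef
  have hS0 : 0 ≤ S := tsum_nonneg fun k => norm_nonneg _
  have hck : ∀ k, c k ≤ S := fun k => hsum.le_tsum k fun i _ => norm_nonneg _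
  have hγS : γ * S < 1 := hsg
  have h1γS : 0 < 1 - γ * S := by linarith
  have hpartial : ∀ k, (∑ j ∈ Finset.range k, c (k - 1 - j)) ≤ S := by
    intro k
    rw [Finset.sum_range_reflect]
    exact Summable.sum_le_tsum _ (fun i _ => norm_nonneg _) hsum
  -- closed form
  have hform : ∀ k, s k = (F ^ k) (s 0) + ∑ j ∈ Finset.range k, (F ^ (k - 1 - j)) (w (s j)) := by
    intro k
    induction k with
    | zero => simp
    | succ k ih =>
      have hsum' : F (∑ j ∈ Finset.range k, (F ^ (k - 1 - j)) (w (s j)))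
          = ∑ j ∈ Finset.range k, (F ^ (k - j)) (w (s j)) := by
        rw [map_sum]
        refine Finset.sum_congr rfl fun j hj => ?_
        have hj' : j < k := Finset.mem_range.mp hj
        have hkj : k - j = (k - 1 - j) + 1 := by omega
        rw [hkj, pow_succ', ContinuousLinearMap.mul_apply]
      have hrhs : (F ^ (k+1)) (s 0) + ∑ j ∈ Finset.range (k+1), (F ^ (k + 1 - 1 - j)) (w (s j))
          = F ((F ^ k) (s 0)) + (∑ j ∈ Finset.range k, (F ^ (k - j)) (w (s j)) + w (s k)) := by
        simp only [Nat.add_sub_cancel]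
        rw [Finset.sum_range_succ, Nat.sub_self, pow_zero, ContinuousLinearMap.one_apply,
          pow_succ', ContinuousLinearMap.mul_apply]
      rw [hs k, ih, map_add, hsum', hrhs, ← ih, add_assoc]
  -- basic recursion inequality
  have hineq : ∀ k, a k ≤ c k * a 0 + γ * ∑ j ∈ Finset.range k, c (k - 1 - j) * a j := by
    intro k
    have h2 : ‖∑ j ∈ Finset.range k, (F ^ (k - 1 - j)) (w (s j))‖
        ≤ ∑ j ∈ Finset.range k, c (k - 1 - j) * (γ * a j) := by
      refine (norm_sum_le _ _).trans (Finset.sum_le_sum fun j _ => ?_)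
      calc ‖(F ^ (k - 1 - j)) (w (s j))‖ ≤ c (k - 1 - j) * ‖w (s j)‖ :=
            ContinuousLinearMap.le_opNorm _ _
        _ ≤ c (k - 1 - j) * (γ * a j) :=
            mul_le_mul_of_nonneg_left (hw (s j)) (norm_nonneg _)
    have h3 : ∑ j ∈ Finset.range k, c (k - 1 - j) * (γ * a j)
        = γ * ∑ j ∈ Finset.range k, c (k - 1 - j) * a j := by
      rw [Finset.mul_sum]
      exact Finset.sum_congr rfl fun j _ => by ring
    calc a k = ‖(F ^ k) (s 0) + ∑ j ∈ Finset.range k, (F ^ (k - 1 - j)) (w (s j))‖ :=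
          congrArg norm (hform k)
      _ ≤ ‖(F ^ k) (s 0)‖ + ‖∑ j ∈ Finset.range k, (F ^ (k - 1 - j)) (w (s j))‖ :=
          norm_add_le _ _
      _ ≤ c k * a 0 + γ * ∑ j ∈ Finset.range k, c (k - 1 - j) * a j := by
          rw [← h3]
          exact add_le_add (ContinuousLinearMap.le_opNorm _ _) h2
  -- uniform bound
  set b : ℝ := S * a 0 / (1 - γ * S) with hbdef
  have hb0 : 0 ≤ b := div_nonneg (mul_nonneg hS0 (norm_nonneg _)) h1γS.le
  have hbb : b * (1 - γ * S) = S * a 0 := div_mul_cancel₀ _ (ne_of_gt h1γS)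
  have hb : ∀ k, a k ≤ b := by
    intro k
    induction k using Nat.strong_induction_on with
    | _ k ih =>
      have hsumle : ∑ j ∈ Finset.range k, c (k - 1 - j) * a j ≤ S * b := by
        calc ∑ j ∈ Finset.range k, c (k - 1 - j) * a j
            ≤ ∑ j ∈ Finset.range k, c (k - 1 - j) * b :=
              Finset.sum_le_sum fun j hj =>
                mul_le_mul_of_nonneg_left (ih j (Finset.mem_range.mp hj)) (norm_nonneg _)
          _ = (∑ j ∈ Finset.range k, c (k - 1 - j)) * b := by rw [Finset.sum_mul]
          _ ≤ S * b := mul_le_mul_of_nonneg_right (hpartial k) hb0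
      calc a k ≤ c k * a 0 + γ * ∑ j ∈ Finset.range k, c (k - 1 - j) * a j := hineq k
        _ ≤ S * a 0 + γ * (S * b) :=
            add_le_add (mul_le_mul_of_nonneg_right (hck k) (norm_nonneg _))
              (mul_le_mul_of_nonneg_left hsumle hγ)
        _ = b := by rw [← hbb]; ring
  -- limsup machinery
  have hbdd : IsBoundedUnder (· ≤ ·) atTop a := isBoundedUnder_of ⟨b, hb⟩
  have hbdd2 : IsBoundedUnder (· ≥ ·) atTop a := isBoundedUnder_of ⟨0, fun k => norm_nonneg (s k)⟩
  have hcobdd : IsCoboundedUnder (· ≤ ·) atTop a := hbdd2.isCoboundedUnder_le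
  have hcobdd2 : IsCoboundedUnder (· ≥ ·) atTop a := hbdd.isCoboundedUnder_ge
  set L : ℝ := limsup a atTop with hLdef
  have hL0 : 0 ≤ L :=
    le_limsup_of_frequently_le ((Filter.Eventually.of_forall fun k => norm_nonneg (s k)).frequently) hbdd
  have key : ∀ ε > 0, L ≤ γ * S * (L + ε) := by
    intro ε hε
    have hLε : L < L + ε := by linarith
    obtain ⟨N, hN⟩ := eventually_atTop.mp (eventually_lt_of_limsup_lt hLε hbdd)
    have hLε0 : 0 ≤ L + ε := by linarith
    set g : ℕ → ℝ := fun k => c k * a 0 + γ * ∑ j ∈ Finset.range N, c (k - 1 - j) * b with hg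
    have hgt : Tendsto g atTop (𝓝 0) := by
      have h1 : Tendsto (fun k => c k * a 0) atTop (𝓝 0) := by
        have h1' := htend0.mul_const (a 0)
        rw [zero_mul] at h1'
        exact h1'
      have h2 : Tendsto (fun k => ∑ j ∈ Finset.range N, c (k - 1 - j) * b) atTop (𝓝 0) := by
        have h3 : Tendsto (fun k => ∑ j ∈ Finset.range N, c (k - 1 - j) * b) atTop
            (𝓝 (∑ _j ∈ Finset.range N, 0)) := by
          refine tendsto_finset_sum _ fun j _ => ?_
          have hcomp : Tendsto (fun k : ℕ => k - 1 - j) atTop atTop :=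
            (tendsto_sub_atTop_nat j).comp (tendsto_sub_atTop_nat 1)
          have h4 := (htend0.comp hcomp).mul_const b
          rw [zero_mul] at h4
          exact h4
        rw [Finset.sum_const_zero] at h3
        exact h3
      have h5 := h1.add (h2.const_mul γ)
      rw [mul_zero, add_zero] at h5
      exact h5
    have hbound : ∀ᶠ k in atTop, a k ≤ g k + γ * S * (L + ε) := by
      filter_upwards [eventually_ge_atTop N] with k hk
      have hsplit : ∑ j ∈ Finset.range k, c (k - 1 - j) * a j
          = ∑ j ∈ Finset.range N, c (k - 1 - j) * a j
            + ∑ j ∈ Finset.Ico N k, c (k - 1 - j) * a j := by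
        rw [Finset.range_eq_Ico, ← Finset.sum_Ico_consecutive _ (Nat.zero_le N) hk,
          ← Finset.range_eq_Ico]
      have hA : ∑ j ∈ Finset.range N, c (k - 1 - j) * a j
          ≤ ∑ j ∈ Finset.range N, c (k - 1 - j) * b :=
        Finset.sum_le_sum fun j _ => mul_le_mul_of_nonneg_left (hb j) (norm_nonneg _)
      have hB : ∑ j ∈ Finset.Ico N k, c (k - 1 - j) * a j ≤ S * (L + ε) := by
        calc ∑ j ∈ Finset.Ico N k, c (k - 1 - j) * a j
            ≤ ∑ j ∈ Finset.Ico N k, c (k - 1 - j) * (L + ε) :=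
              Finset.sum_le_sum fun j hj =>
                mul_le_mul_of_nonneg_left (le_of_lt (hN j (Finset.mem_Ico.mp hj).1))
                  (norm_nonneg _)
          _ = (∑ j ∈ Finset.Ico N k, c (k - 1 - j)) * (L + ε) := by rw [Finset.sum_mul]
          _ ≤ S * (L + ε) := by
              refine mul_le_mul_of_nonneg_right ?_ hLε0
              calc ∑ j ∈ Finset.Ico N k, c (k - 1 - j)
                  ≤ ∑ j ∈ Finset.range k, c (k - 1 - j) := by
                    refine Finset.sum_le_sum_of_subset_of_nonneg ?_ fun j _ _ => norm_nonneg _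
                    rw [Finset.range_eq_Ico]
                    exact Finset.Ico_subset_Ico (Nat.zero_le N) le_rfl
                _ ≤ S := hpartial k
      calc a k ≤ c k * a 0 + γ * ∑ j ∈ Finset.range k, c (k - 1 - j) * a j := hineq k
        _ ≤ c k * a 0 + γ * (∑ j ∈ Finset.range N, c (k - 1 - j) * b + S * (L + ε)) := by
            refine add_le_add_right (mul_le_mul_of_nonneg_left ?_ hγ) _
            rw [hsplit]
            exact add_le_add hA hB
        _ = g k + γ * S * (L + ε) := by rw [hg]; ring
    refine le_of_forall_pos_le_add fun δ hδ => ?_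
    have hgδ : ∀ᶠ k in atTop, g k < δ := hgt.eventually (gt_mem_nhds hδ)
    have hfin : ∀ᶠ k in atTop, a k ≤ γ * S * (L + ε) + δ := by
      filter_upwards [hbound, hgδ] with k h1 h2
      linarith
    exact limsup_le_of_le hcobdd hfin
  have hγS0 : 0 ≤ γ * S := mul_nonneg hγ hS0
  have hLle : L ≤ 0 := by
    have h2 : L ≤ γ * S * L := by
      refine le_of_forall_pos_le_add fun δ hδ => ?_
      have hεpos : (0:ℝ) < δ / (γ * S + 1) := by positivity
      have hkey := key _ hεpos
      have h3 : γ * S * (δ / (γ * S + 1)) ≤ δ := by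
        rw [← mul_div_assoc, div_le_iff₀ (by positivity)]
        nlinarith
      nlinarith
    by_contra hcon
    push_neg at hcon
    have := mul_lt_mul_of_pos_right hγS hcon
    rw [one_mul] at this
    linarith
  have hliminf : (0:ℝ) ≤ liminf a atTop :=
    le_liminf_of_le hcobdd2 (Filter.Eventually.of_forall fun k => norm_nonneg (s k))
  have ha0 : Tendsto a atTop (𝓝 0) :=
    tendsto_of_le_liminf_of_limsup_le hliminf hLle hbdd hbdd2
  exact tendsto_zero_iff_norm_tendsto_zero.mpr ha0
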